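/- Let V ⊆ R^d be the span of a finite (possibly empty) set of vectors of Z^d, and let H = V^⊥. Then H ∩ S_Q^{d-1} is dense in H ∩ S^{d-1}. -/

import Mathlib

open scoped InnerProductSpace ENNReal Classical
open MeasureTheory

noncomputable section

namespace BootstrapU

/-- Euclidean space `ℝ^d`. -/
abbrev E (d : ℕ) : Type := EuclideanSpace ℝ (Fin d)

/-- The embedding of the lattice `ℤ^d` into `ℝ^d`. -/
def toE {d : ℕ} (v : Fin d → ℤ) : E d :=
  (EuclideanSpace.equiv (Fin d) ℝ).symm fun i => (v i : ℝ)

/-- The unit sphere `S^{d-1}` of `ℝ^d`. -/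
def unitSphere (d : ℕ) : Set (E d) := Metric.sphere 0 1

/-- The rational directions of the sphere: unit vectors whose line meets `ℤ^d ∖ {0}`. -/
def ratSphere (d : ℕ) : Set (E d) :=
  {w | w ∈ unitSphere d ∧ ∃ x : Fin d → ℤ, x ≠ 0 ∧ ∃ c : ℝ, toE x = c • w}

/-- `L_R`: vectors lying on a line spanned by a non-zero integer vector of norm at most `R`. -/
def LR (d : ℕ) (R : ℝ) : Set (E d) :=
  {w | ∃ x : Fin d → ℤ, x ≠ 0 ∧ ‖toE x‖ ≤ R ∧ ∃ c : ℝ, w = c • toE x}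

/-- One step of the bootstrap process with rules `Us`. -/
def bstep {G : Type*} [AddCommGroup G] (Us : Set (Finset G)) (A : Set G) : Set G :=
  A ∪ {x | ∃ X ∈ Us, ∀ y ∈ X, x + y ∈ A}

/-- The closure `[A]` of the bootstrap process with rules `Us`. -/
def bclosure {G : Type*} [AddCommGroup G] (Us : Set (Finset G)) (A : Set G) : Set G :=
  ⋃ t : ℕ, (bstep Us)^[t] A

/-- A `d`-dimensional update family: a finite collection of finite non-empty subsets of
`ℤ^d ∖ {0}`. -/
def IsUpdateFamily {d : ℕ} (U : Finset (Finset (Fin d → ℤ))) : Prop :=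
  ∀ X ∈ U, X.Nonempty ∧ (0 : Fin d → ℤ) ∉ X

/-- The update rules reduced modulo `n`, acting on the torus `(ℤ/nℤ)^d`. -/
def torusRules (d n : ℕ) (U : Finset (Finset (Fin d → ℤ))) : Set (Finset (Fin d → ZMod n)) :=
  ↑(U.image fun X => X.image fun v i => (v i : ZMod n))

/-- The Bernoulli product measure with density `p`, on subsets of `ι` encoded as
indicator functions `ι → Bool`: the unique probability measure giving each finite
cylinder event its product probability. -/
def bernoulliP (ι : Type*) (p : ℝ) : Measure (ι → Bool) :=
  if h : ∃ μ : Measure (ι → Bool), IsProbabilityMeasure μ ∧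
      ∀ (s : Finset ι) (f : ι → Bool),
        μ {ω | ∀ i ∈ s, ω i = f i} =
          ∏ i ∈ s, (if f i then ENNReal.ofReal p else ENNReal.ofReal (1 - p))
  then h.choose else 0

/-- The probability that a `p`-random subset of the torus `(ℤ/nℤ)^d` percolates. -/
def percTorus (d n : ℕ) (U : Finset (Finset (Fin d → ℤ))) (p : ℝ) : ℝ≥0∞ :=
  bernoulliP (Fin d → ZMod n) p
    {ω | bclosure (torusRules d n U) {x | ω x = true} = Set.univ}

/-- The critical probability `p_c((ℤ/nℤ)^d, U)`. -/
def pcTorus (d n : ℕ) (U : Finset (Finset (Fin d → ℤ))) : ℝ :=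
  sInf {p : ℝ | 0 < p ∧ p ≤ 1 ∧ 1 / 2 ≤ percTorus d n U p}

/-- The probability that a `p`-random subset of `ℤ^d` percolates. -/
def percZ (d : ℕ) (U : Finset (Finset (Fin d → ℤ))) (p : ℝ) : ℝ≥0∞ :=
  bernoulliP (Fin d → ℤ) p
    {ω | bclosure (↑U : Set (Finset (Fin d → ℤ))) {x | ω x = true} = Set.univ}

/-- The critical probability `p_c(ℤ^d, U)`. -/
def pcZ (d : ℕ) (U : Finset (Finset (Fin d → ℤ))) : ℝ :=
  sInf {p : ℝ | 0 < p ∧ p ≤ 1 ∧ 1 / 2 ≤ percZ d U p}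

/-- The discrete half-space `H_u ⊆ ℤ^d`. -/
def halfLat {d : ℕ} (u : E d) : Set (Fin d → ℤ) := {x | ⟪toE x, u⟫_ℝ < 0}

/-- The stable set `S(U)` of an update family. -/
def stableSet (d : ℕ) (U : Finset (Finset (Fin d → ℤ))) : Set (E d) :=
  {u | u ∈ unitSphere d ∧
    bclosure (↑U : Set (Finset (Fin d → ℤ))) (halfLat u) = halfLat u}

/-- The centre of a sphere embedded in the unit sphere: the unique point of the affine
span of `S` equidistant from all points of `S`. -/
def sphCenter {d : ℕ} (S : Set (E d)) : E d :=
  if h : ∃ c : E d, c ∈ affineSpan ℝ S ∧ ∃ r : ℝ, ∀ x ∈ S, dist x c = r then h.choose else 0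

/-- The sphere `S_η(S, u) = {v ∈ S : ‖u - v‖ = η}`. -/
def sSphere {d : ℕ} (S : Set (E d)) (u : E d) (η : ℝ) : Set (E d) :=
  {v | v ∈ S ∧ ‖u - v‖ = η}

/-- `S` is a `k`-dimensional sphere of positive radius embedded in the unit sphere:
the intersection of `S^{d-1}` with a `(k+1)`-dimensional affine subspace. -/
def IsEmbSphere (d k : ℕ) (S : Set (E d)) : Prop :=
  ∃ A : AffineSubspace ℝ (E d), Module.finrank ℝ A.direction = k + 1 ∧
    (∃ y ∈ A, ‖y‖ < 1) ∧ S = ↑A ∩ unitSphere d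

/-- `H` is an open hemisphere of the sphere `S`: the intersection of `S` with an open
half-space whose boundary hyperplane contains the centre of `S`. -/
def IsOpenHemi {d : ℕ} (S H : Set (E d)) : Prop :=
  ∃ u : E d, u ≠ 0 ∧ u ∈ (affineSpan ℝ S).direction ∧
    H = {x | x ∈ S ∧ 0 < ⟪x - sphCenter S, u⟫_ℝ}

/-- `T` is an `S`-stable set: `T ∩ S` is a finite intersection of finite unions of
closed hemispheres of `S`. -/
def IsStableIn {d : ℕ} (S T : Set (E d)) : Prop :=
  ∃ (m : ℕ) (Y : Fin m → Finset (E d)),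
    (∀ i, ∀ y ∈ Y i, y ≠ 0 ∧ y ∈ (affineSpan ℝ S).direction) ∧
    T ∩ S = S ∩ ⋂ i, ⋃ y ∈ Y i, {x | 0 ≤ ⟪x - sphCenter S, y⟫_ℝ}

/-- Two subsets of `ℝ^d` are equivalent if one is the image of the other under a
composition of translations, dilations and rotations. -/
def SimEquiv {d : ℕ} (A B : Set (E d)) : Prop :=
  ∃ (c : ℝ) (O : E d ≃ₗᵢ[ℝ] E d) (b : E d), 0 < c ∧
    LinearMap.det O.toLinearEquiv.toLinearMap = 1 ∧
    B = (fun x => c • O x + b) '' A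

/-- Given a function `r` on spheres, `rhoAux r S T u` is the eventual value of
`r (S_η(S,u)) T` for all sufficiently small `η > 0` if `u ∈ T` (and this eventual
value exists), and `0` otherwise. -/
def rhoAux {d : ℕ} (r : Set (E d) → Set (E d) → ℕ) (S T : Set (E d)) (u : E d) : ℕ :=
  if u ∈ T then
    (if h : ∃ n : ℕ, ∃ η0 : ℝ, 0 < η0 ∧ ∀ η : ℝ, 0 < η → η < η0 → r (sSphere S u η) T = n
      then h.choose else 0)
  else 0

/-- The resistance function `r^k`, applied to `(k-1)`-dimensional spheres `S` and
`S`-stable sets `T`. -/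
def resR (d : ℕ) : ℕ → Set (E d) → Set (E d) → ℕ
  | 0, _, _ => 1
  | k + 1, S, T =>
      sInf {n : ℕ | ∃ H : Set (E d), IsOpenHemi S H ∧
        n = sSup {m : ℕ | ∃ u ∈ H, m = rhoAux (resR d k) S T u} + 1}

/-- The induced resistance `ρ^k`, applied to `k`-dimensional spheres `S`, `S`-stable
sets `T` and `u ∈ S`. -/
def resRho (d k : ℕ) (S T : Set (E d)) (u : E d) : ℕ := rhoAux (resR d k) S T u

/-- The resistance `r(U) = r^d(S^{d-1}; S(U))` of an update family. -/
def resistance (d : ℕ) (U : Finset (Finset (Fin d → ℤ))) : ℕ :=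
  resR d d (unitSphere d) (stableSet d U)

/-- The open hemisphere of `S^{d-1}` with pole `u`. -/
def openHemi (d : ℕ) (u : E d) : Set (E d) := {v | v ∈ unitSphere d ∧ 0 < ⟪v, u⟫_ℝ}

/-- The closed hemisphere of `S^{d-1}` with pole `u`. -/
def closedHemi (d : ℕ) (u : E d) : Set (E d) := {v | v ∈ unitSphere d ∧ 0 ≤ ⟪v, u⟫_ℝ}

/-- The interior of a subset of the sphere `S^{d-1}`, in the topology of the sphere. -/
def sphInt (d : ℕ) (T : Set (E d)) : Set (E d) :=
  {u | u ∈ unitSphere d ∧ ∃ ε : ℝ, 0 < ε ∧ ∀ v ∈ unitSphere d, dist v u < ε → v ∈ T}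

/-- `U` is supercritical: some open hemisphere misses the stable set. -/
def Supercritical (d : ℕ) (U : Finset (Finset (Fin d → ℤ))) : Prop :=
  ∃ u ∈ unitSphere d, openHemi d u ∩ stableSet d U = ∅

/-- `U` is critical: some closed hemisphere meets the stable set in a set with empty
interior, and every open hemisphere meets the stable set. -/
def Critical (d : ℕ) (U : Finset (Finset (Fin d → ℤ))) : Prop :=
  (∃ u ∈ unitSphere d, sphInt d (closedHemi d u ∩ stableSet d U) = ∅) ∧
    ∀ u ∈ unitSphere d, (openHemi d u ∩ stableSet d U).Nonempty

/-- `U` is subcritical: every closed hemisphere meets the stable set in a set with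
non-empty interior. -/
def Subcritical (d : ℕ) (U : Finset (Finset (Fin d → ℤ))) : Prop :=
  ∀ u ∈ unitSphere d, (sphInt d (closedHemi d u ∩ stableSet d U)).Nonempty

/-- The iterated logarithm: `iterLog 0 x = x` and `iterLog (r+1) x = log (iterLog r x)`. -/
def iterLog : ℕ → ℝ → ℝ
  | 0, x => x
  | r + 1, x => Real.log (iterLog r x)

/-- The stable set `S(F)` of a general finite collection of finite subsets of `ℤ^d`. -/
def famStable (d : ℕ) (F : Finset (Finset (Fin d → ℤ))) : Set (E d) :=
  {u | u ∈ unitSphere d ∧ ∀ X ∈ F, ∃ x ∈ X, 0 ≤ ⟪toE x, u⟫_ℝ}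

/-- The span `⟨F⟩` of a family: the span of the union of its rules. -/
def famSpan (d : ℕ) (F : Finset (Finset (Fin d → ℤ))) : Submodule ℝ (E d) :=
  Submodule.span ℝ {y | ∃ X ∈ F, ∃ x ∈ X, y = toE x}

/-- The induced family `F[W] = {X ∩ W^⊥ : X ∈ F, X ⊆ H(W)}`. -/
def induced (d : ℕ) (F : Finset (Finset (Fin d → ℤ))) (W : Set (E d)) :
    Finset (Finset (Fin d → ℤ)) :=
  (F.filter fun X => ∀ x ∈ X, ∀ u ∈ W, ⟪toE x, u⟫_ℝ ≤ 0).image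
    fun X => X.filter fun x => ∀ u ∈ W, ⟪toE x, u⟫_ℝ = 0

/-- The sphere `S(W) = S^{d-1} ∩ W^⊥`. -/
def sphereOf (d : ℕ) (W : Set (E d)) : Set (E d) :=
  {x | x ∈ unitSphere d ∧ x ∈ (Submodule.span ℝ W)ᗮ}

/-- The projection `π(u, W^⊥)`: the unique `v ∈ S(W)` such that `u = w + λ • v` with
`w ∈ span W` and `λ > 0`. -/
def projDir {d : ℕ} (W : Set (E d)) (u : E d) : E d :=
  if h : ∃ v : E d, v ∈ sphereOf d W ∧
      ∃ w ∈ Submodule.span ℝ W, ∃ lam : ℝ, 0 < lam ∧ u = w + lam • v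
  then h.choose else 0

/-- The Voronoi cell of `u` with respect to the finite set `Q ⊆ S^{d-1}`. -/
def cellOf {d : ℕ} (Q : Finset (E d)) (u : E d) : Set (E d) :=
  {w | w ∈ unitSphere d ∧ ∀ v ∈ Q, ⟪v, w⟫_ℝ ≤ ⟪u, w⟫_ℝ}

/-- `Q` is quasistable for range `R`. -/
def IsQuasistable (d : ℕ) (R : ℝ) (Q : Finset (E d)) : Prop :=
  ↑Q ⊆ ratSphere d ∧
  (∀ u ∈ unitSphere d, ∃ q ∈ Q, 0 < ⟪q, u⟫_ℝ) ∧
  ∀ u ∈ Q, ∀ w ∈ LR d R,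
    ((cellOf Q u ∩ {x | ⟪x, w⟫_ℝ = 0}).Nonempty ↔ ⟪u, w⟫_ℝ = 0)

/-- The polytope `P(W)` determined by the quasistable set `Q`. -/
def polyP (d : ℕ) (Q : Finset (E d)) (W : Set (E d)) : Set (E d) :=
  {x | (∀ u ∈ Q, ⟪x, u⟫_ℝ ≤ 1) ∧ ∀ u ∈ W, ⟪x, u⟫_ℝ = 1}

/-- The stretched (tubular) polytope `P(W, w)`. -/
def polyPw (d : ℕ) (Q : Finset (E d)) (W : Set (E d)) (w : E d) : Set (E d) :=
  {x | (∀ u ∈ Q, ⟪x - (if 0 ≤ ⟪u, w⟫_ℝ then w else 0), u⟫_ℝ ≤ 1) ∧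
    ∀ u ∈ W, ⟪x - (if 0 ≤ ⟪u, w⟫_ℝ then w else 0), u⟫_ℝ = 1}

/-- The buffer `E(H)` of a subspace `H` with respect to the sphere `S` and radii `del`,
where `del (i+1)` is the radius `δ_i` used for subspaces of dimension `i+1`, and the
buffer of the zero subspace is empty. -/
def buffer {m : ℕ} (S : Set (E m)) (del : ℕ → ℝ) (H : Submodule ℝ (E m)) : Set (E m) :=
  if Module.finrank ℝ H = 0 then ∅
  else {z | z ∈ S ∧ Metric.infDist z (H : Set (E m)) < del (Module.finrank ℝ H)}

/-- The expanded buffer `E⁺(H)`. -/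
def expBuffer {m : ℕ} (S : Set (E m)) (del : ℕ → ℝ) (H : Submodule ℝ (E m)) : Set (E m) :=
  if Module.finrank ℝ H = 0 then ∅
  else {z | z ∈ S ∧ Metric.infDist z (H : Set (E m)) < 3 * del (Module.finrank ℝ H)}

/-- `(ℝ^{k+1}, S, Hs, del)` is a spherical buffer system, where `del j` denotes `δ_{j-1}`
(so `del 0 = δ_{-1}` is the radius of `S`). -/
def IsSBS (k : ℕ) (S : Set (E (k + 1))) (Hs : Finset (Submodule ℝ (E (k + 1))))
    (del : ℕ → ℝ) : Prop :=
  0 < del 0 ∧ S = Metric.sphere 0 (del 0) ∧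
  (∀ H ∈ Hs, H ≠ ⊤) ∧ (∀ H ∈ Hs, ∀ H' ∈ Hs, H ⊓ H' ∈ Hs) ∧
  ∀ i < k, 0 < del (i + 1) ∧ del (i + 1) < del i / 3

/-- The set `Q̄(B)` of a spherical buffer system. -/
def QbarSBS (k : ℕ) (S : Set (E (k + 1))) (Hs : Finset (Submodule ℝ (E (k + 1))))
    (del : ℕ → ℝ) : Set (E (k + 1)) :=
  S ∩ ⋃ H ∈ insert (⊤ : Submodule ℝ (E (k + 1))) Hs,
    ((H : Set (E (k + 1))) \ ⋃ H' ∈ Hs, ⋃ (_ : H' < H), buffer S del H')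

/-- A good spherical buffer system. -/
def IsGoodSBS (k : ℕ) (S : Set (E (k + 1))) (Hs : Finset (Submodule ℝ (E (k + 1))))
    (del : ℕ → ℝ) : Prop :=
  IsSBS k S Hs del ∧
  ∀ H ∈ Hs, ∀ H' ∈ Hs, ¬H ≤ H' → ¬H' ≤ H →
    expBuffer S del H ∩ expBuffer S del H' ⊆ buffer S del (H ⊓ H')

/-- The set `{±e_1, …, ±e_d} ⊆ ℤ^d`. -/
def basisPM (d : ℕ) : Finset (Fin d → ℤ) :=
  (Finset.univ.image fun i : Fin d => Pi.single i (1 : ℤ)) ∪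
    (Finset.univ.image fun i : Fin d => Pi.single i (-1 : ℤ))

/-- The `r`-neighbour update family `N_r^d`. -/
def Nrd (d r : ℕ) : Finset (Finset (Fin d → ℤ)) :=
  (basisPM d).powerset.filter fun X => X.card = r


/-! ### Auxiliary material for `rational_directions_dense` -/

/-- The embedding of `ℚ^d` into `ℝ^d`. -/
def toER {d : ℕ} (q : Fin d → ℚ) : E d :=
  (EuclideanSpace.equiv (Fin d) ℝ).symm fun i => (q i : ℝ)

lemma toE_eq_toER {d : ℕ} (v : Fin d → ℤ) : toE v = toER (fun i => (v i : ℚ)) := by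
  ext i; simp [toE, toER]

lemma toER_add {d : ℕ} (p q : Fin d → ℚ) : toER (p + q) = toER p + toER q := by
  ext i; simp [toER, EuclideanSpace.equiv]

lemma toER_zero {d : ℕ} : toER (0 : Fin d → ℚ) = 0 := by
  ext i; simp [toER, EuclideanSpace.equiv]

lemma toER_sub {d : ℕ} (p q : Fin d → ℚ) : toER (p - q) = toER p - toER q := by
  ext i; simp [toER, EuclideanSpace.equiv]

lemma toER_smul {d : ℕ} (c : ℚ) (q : Fin d → ℚ) : toER (c • q) = (c : ℝ) • toER q := by
  ext i; simp [toER, EuclideanSpace.equiv]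

lemma toER_sum {d : ℕ} {α : Type*} (s : Finset α) (f : α → (Fin d → ℚ)) :
    toER (∑ a ∈ s, f a) = ∑ a ∈ s, toER (f a) := by
  ext i
  simp only [toER]
  induction s using Finset.induction_on with
  | empty => simp
  | insert h ih => simp_all [Finset.sum_insert]

/-- The rational inner product on `ℚ^d`. -/
def qip {d : ℕ} (a b : Fin d → ℚ) : ℚ := ∑ i, a i * b i

lemma inner_toER {d : ℕ} (a b : Fin d → ℚ) : ⟪toER a, toER b⟫_ℝ = (qip a b : ℝ) := by
  simp [toER, qip, PiLp.inner_apply, RCLike.inner_apply]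
  exact Finset.sum_congr rfl fun i _ => mul_comm _ _

lemma qip_comm {d : ℕ} (a b : Fin d → ℚ) : qip a b = qip b a := by simp [qip, mul_comm]

lemma qip_self_eq_zero {d : ℕ} {a : Fin d → ℚ} (h : qip a a = 0) : a = 0 := by
  funext i
  have h2 := (Finset.sum_eq_zero_iff_of_nonneg (fun j _ => mul_self_nonneg (a j))).1 h i
    (Finset.mem_univ i)
  simpa [mul_self_eq_zero] using h2

lemma qip_sub_left {d : ℕ} (a b c : Fin d → ℚ) : qip (a - b) c = qip a c - qip b c := by
  simp [qip, sub_mul, Finset.sum_sub_distrib]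

lemma qip_smul_left {d : ℕ} (r : ℚ) (a b : Fin d → ℚ) : qip (r • a) b = r * qip a b := by
  simp [qip, Finset.mul_sum, mul_assoc]

lemma qip_sum_left {d : ℕ} {α : Type*} (s : Finset α) (f : α → (Fin d → ℚ)) (b : Fin d → ℚ) :
    qip (∑ a ∈ s, f a) b = ∑ a ∈ s, qip (f a) b := by
  simp [qip, Finset.sum_mul]; rw [Finset.sum_comm]

/-- Gram–Schmidt over `ℚ`: every finite set of rational vectors has an orthogonal
finite set of rational vectors with the same rational span. -/
lemma gs {d : ℕ} (S : Finset (Fin d → ℚ)) :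
    ∃ S' : Finset (Fin d → ℚ),
      (∀ a ∈ S', ∀ b ∈ S', a ≠ b → qip a b = 0) ∧
      Submodule.span ℚ (↑S' : Set (Fin d → ℚ)) = Submodule.span ℚ (↑S : Set (Fin d → ℚ)) := by
  induction S using Finset.induction_on with
  | empty => exact ⟨∅, by simp, rfl⟩
  | @insert t S0 ht ih =>
    obtain ⟨S', horth, hspan⟩ := ih
    set t' : Fin d → ℚ := t - ∑ s ∈ S', (qip t s / qip s s) • s with ht'
    have key : ∀ s ∈ S', qip t' s = 0 := by
      intro s hs
      rw [ht', qip_sub_left, qip_sum_left]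
      rw [Finset.sum_eq_single s (fun r hr hrs => by
        rw [qip_smul_left, horth r hr s hs hrs, mul_zero]) (fun h => absurd hs h)]
      rw [qip_smul_left]
      by_cases hss : qip s s = 0
      · have : s = 0 := qip_self_eq_zero hss
        simp [this, qip]
      · rw [div_mul_cancel₀ _ hss, sub_self]
    refine ⟨insert t' S', ?_, ?_⟩
    · intro a ha b hb hab
      rcases Finset.mem_insert.1 ha with rfl | ha <;> rcases Finset.mem_insert.1 hb with rfl | hb
      · exact absurd rfl hab
      · exact key b hb
      · rw [qip_comm]; exact key a ha
      · exact horth a ha b hb hab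
    · have hmem : (∑ s ∈ S', (qip t s / qip s s) • s) ∈ Submodule.span ℚ (↑S' : Set (Fin d → ℚ)) :=
        Submodule.sum_mem _ fun s hs => Submodule.smul_mem _ _ (Submodule.subset_span hs)
      rw [Finset.coe_insert, Finset.coe_insert, Submodule.span_insert, Submodule.span_insert,
        hspan]
      apply le_antisymm
      · rw [sup_le_iff]
        constructor
        · rw [Submodule.span_singleton_le_iff_mem]
          have : t' = t - ∑ s ∈ S', (qip t s / qip s s) • s := ht'
          rw [this]
          exact Submodule.sub_mem _
            (Submodule.mem_sup_left (Submodule.mem_span_singleton_self t))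
            (Submodule.mem_sup_right (hspan ▸ hmem))
        · exact le_sup_right
      · rw [sup_le_iff]
        constructor
        · rw [Submodule.span_singleton_le_iff_mem]
          have : t = t' + ∑ s ∈ S', (qip t s / qip s s) • s := by rw [ht']; ring
          rw [this]
          exact Submodule.add_mem _
            (Submodule.mem_sup_left (Submodule.mem_span_singleton_self t'))
            (Submodule.mem_sup_right (hspan ▸ hmem))
        · exact le_sup_right

lemma mem_orthogonal_span_of {d : ℕ} {X : Set (E d)} {v : E d}
    (h : ∀ s ∈ X, ⟪s, v⟫_ℝ = 0) : v ∈ (Submodule.span ℝ X)ᗮ := by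
  rw [Submodule.mem_orthogonal]
  intro u hu
  induction hu using Submodule.span_induction with
  | mem s hs => exact h s hs
  | zero => exact inner_zero_left v
  | add a b _ _ ha hb => rw [inner_add_left, ha, hb, add_zero]
  | smul c a _ ha => rw [real_inner_smul_left, ha, mul_zero]

/-- Projection of a rational point onto the orthocomplement of a rational
orthogonal family stays rational and gets closer to any target in the orthocomplement. -/
lemma approx {d : ℕ} (S' : Finset (Fin d → ℚ))
    (horth : ∀ a ∈ S', ∀ b ∈ S', a ≠ b → qip a b = 0)
    (x : E d) (hx : x ∈ (Submodule.span ℝ (toER '' (↑S' : Set (Fin d → ℚ))))ᗮ)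
    (q : Fin d → ℚ) :
    ∃ q' : Fin d → ℚ, toER q' ∈ (Submodule.span ℝ (toER '' (↑S' : Set (Fin d → ℚ))))ᗮ ∧
      ‖toER q' - x‖ ≤ (1 + S'.card) * ‖toER q - x‖ := by
  set q' : Fin d → ℚ := q - ∑ s ∈ S', (qip q s / qip s s) • s with hq'
  have key : ∀ s ∈ S', qip q' s = 0 := by
    intro s hs
    rw [hq', qip_sub_left, qip_sum_left]
    rw [Finset.sum_eq_single s (fun r hr hrs => by
      rw [qip_smul_left, horth r hr s hs hrs, mul_zero]) (fun h => absurd hs h)]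
    rw [qip_smul_left]
    by_cases hss : qip s s = 0
    · have : s = 0 := qip_self_eq_zero hss
      simp [this, qip]
    · rw [div_mul_cancel₀ _ hss, sub_self]
  refine ⟨q', ?_, ?_⟩
  · apply mem_orthogonal_span_of
    rintro s ⟨r, hr, rfl⟩
    rw [inner_toER, qip_comm, key r hr, Rat.cast_zero]
  · have hxs : ∀ s ∈ S', ⟪toER s, x⟫_ℝ = 0 := fun s hs =>
      Submodule.inner_right_of_mem_orthogonal
        (Submodule.subset_span (Set.mem_image_of_mem _ hs)) hx
    set z : E d := toER q - x with hz
    have hexp : toER q' - x = z - ∑ s ∈ S', ((qip q s / qip s s : ℚ) : ℝ) • toER s := by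
      rw [hq', toER_sub, toER_sum]
      simp only [toER_smul]
      rw [hz]
      abel
    have hterm : ∀ s ∈ S', ‖((qip q s / qip s s : ℚ) : ℝ) • toER s‖ ≤ ‖z‖ := by
      intro s hs
      by_cases h0 : toER s = 0
      · simp [h0, norm_nonneg]
      · have hns : (0:ℝ) < ‖toER s‖ := norm_pos_iff.2 h0
        have hcoef : ((qip q s / qip s s : ℚ) : ℝ) = ⟪toER s, z⟫_ℝ / ‖toER s‖ ^ 2 := by
          rw [Rat.cast_div, ← inner_toER, ← inner_toER, real_inner_self_eq_norm_sq]
          congr 1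
          rw [real_inner_comm, hz, inner_sub_right, hxs s hs, sub_zero]
        rw [hcoef, norm_smul, Real.norm_eq_abs, abs_div, abs_of_nonneg (by positivity :
          (0:ℝ) ≤ ‖toER s‖ ^ 2)]
        rw [div_mul_eq_mul_div, div_le_iff₀ (by positivity)]
        calc |⟪toER s, z⟫_ℝ| * ‖toER s‖ ≤ ‖toER s‖ * ‖z‖ * ‖toER s‖ :=
              mul_le_mul_of_nonneg_right (abs_real_inner_le_norm _ _) (le_of_lt hns)
          _ = ‖z‖ * ‖toER s‖ ^ 2 := by ring
    calc ‖toER q' - x‖ ≤ ‖z‖ + ‖∑ s ∈ S', ((qip q s / qip s s : ℚ) : ℝ) • toER s‖ := by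
          rw [hexp]; exact norm_sub_le _ _
      _ ≤ ‖z‖ + ∑ s ∈ S', ‖((qip q s / qip s s : ℚ) : ℝ) • toER s‖ := by
          gcongr; exact norm_sum_le _ _
      _ ≤ ‖z‖ + ∑ s ∈ S', ‖z‖ := by gcongr with s hs; exact hterm s hs
      _ = (1 + S'.card) * ‖z‖ := by rw [Finset.sum_const, nsmul_eq_mul]; ring

lemma toER_mem_span {d : ℕ} {S : Finset (Fin d → ℚ)} {x : Fin d → ℚ}
    (hx : x ∈ Submodule.span ℚ (↑S : Set (Fin d → ℚ))) :
    toER x ∈ Submodule.span ℝ (toER '' (↑S : Set (Fin d → ℚ))) := by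
  induction hx using Submodule.span_induction with
  | mem s hs => exact Submodule.subset_span (Set.mem_image_of_mem _ hs)
  | zero => rw [toER_zero]; exact Submodule.zero_mem _
  | add a b _ _ ha hb => rw [toER_add]; exact Submodule.add_mem _ ha hb
  | smul c a _ ha => rw [toER_smul]; exact Submodule.smul_mem _ _ ha

lemma spanR_eq_of_spanQ_eq {d : ℕ} {S S' : Finset (Fin d → ℚ)}
    (h : Submodule.span ℚ (↑S' : Set (Fin d → ℚ)) = Submodule.span ℚ (↑S : Set (Fin d → ℚ))) :
    Submodule.span ℝ (toER '' (↑S' : Set (Fin d → ℚ)))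
      = Submodule.span ℝ (toER '' (↑S : Set (Fin d → ℚ))) := by
  apply le_antisymm <;> rw [Submodule.span_le] <;> rintro _ ⟨s, hs, rfl⟩
  · exact toER_mem_span (h ▸ Submodule.subset_span hs)
  · exact toER_mem_span (h ▸ Submodule.subset_span hs)

/-- Rational points are dense in `ℝ^d`. -/
lemma rat_dense {d : ℕ} (x : E d) {ε : ℝ} (hε : 0 < ε) :
    ∃ q : Fin d → ℚ, ‖toER q - x‖ < ε := by
  set δ : ℝ := ε / (2 * (d + 1)) with hδdef
  have hδ : 0 < δ := by positivity
  choose q hq using fun i => exists_rat_near (x i) hδ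
  refine ⟨q, ?_⟩
  have hnorm : ‖toER q - x‖ = Real.sqrt (∑ i, ‖toER q i - x i‖ ^ 2) := by
    rw [EuclideanSpace.norm_eq]; rfl
  have hb : ∀ i, ‖toER q i - x i‖ ^ 2 ≤ δ ^ 2 := by
    intro i
    have h1 : ‖toER q i - x i‖ ≤ δ := by
      rw [Real.norm_eq_abs, abs_sub_comm]
      exact le_of_lt (hq i)
    exact pow_le_pow_left₀ (norm_nonneg _) h1 2
  have hle : (∑ i, ‖toER q i - x i‖ ^ 2) ≤ (((d : ℝ) + 1) * δ) ^ 2 := by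
    have := Finset.sum_le_sum (fun i (_ : i ∈ Finset.univ) => hb i)
    rw [Finset.sum_const, Finset.card_univ, Fintype.card_fin, nsmul_eq_mul] at this
    nlinarith [Nat.cast_nonneg (α := ℝ) d, sq_nonneg δ, hδ.le]
  have h2 : Real.sqrt (∑ i, ‖toER q i - x i‖ ^ 2) ≤ ((d : ℝ) + 1) * δ := by
    calc Real.sqrt (∑ i, ‖toER q i - x i‖ ^ 2) ≤ Real.sqrt ((((d : ℝ) + 1) * δ) ^ 2) :=
          Real.sqrt_le_sqrt hle
      _ = ((d : ℝ) + 1) * δ := Real.sqrt_sq (by positivity)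
  have h3 : ((d : ℝ) + 1) * δ = ε / 2 := by
    rw [hδdef]; field_simp
  rw [hnorm]
  linarith

/-- Clearing denominators of a rational vector. -/
lemma clear_denom {d : ℕ} (q : Fin d → ℚ) :
    ∃ (x : Fin d → ℤ) (N : ℕ), 0 < N ∧ ∀ i, ((x i : ℚ)) = (N : ℚ) * q i := by
  set N : ℕ := ∏ i, (q i).den with hN
  refine ⟨fun i => (q i).num * ((N / (q i).den : ℕ) : ℤ), N,
    Finset.prod_pos fun i _ => (q i).pos, fun i => ?_⟩
  have hdvd : (q i).den ∣ N := Finset.dvd_prod_of_mem _ (Finset.mem_univ i)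
  have hden : ((q i).den : ℚ) ≠ 0 := by exact_mod_cast (q i).den_nz
  have hnum : q i * ((q i).den : ℚ) = ((q i).num : ℚ) := by
    have h := (Rat.num_div_den (q i)).symm
    rw [eq_div_iff hden] at h
    exact h.symm ▸ rfl
  rw [Int.cast_mul, Int.cast_natCast, ← hnum, mul_assoc, ← Nat.cast_mul,
    Nat.mul_div_cancel' hdvd, mul_comm]

/-- rational directions are dense on rational subspheres. -/
theorem rational_directions_dense (d : ℕ) (T : Finset (Fin d → ℤ)) :
    (((Submodule.span ℝ (toE '' (T : Set (Fin d → ℤ))))ᗮ : Set (E d)) ∩ unitSphere d) ⊆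
      closure
        (((Submodule.span ℝ (toE '' (T : Set (Fin d → ℤ))))ᗮ : Set (E d)) ∩ ratSphere d) := by
  intro w hw
  obtain ⟨hwH, hwS⟩ := hw
  classical
  set S : Finset (Fin d → ℚ) := T.image (fun t i => ((t i : ℚ))) with hSdef
  have himg : toER '' (↑S : Set (Fin d → ℚ)) = toE '' (T : Set (Fin d → ℤ)) := by
    rw [hSdef, Finset.coe_image, Set.image_image]
    exact Set.image_congr fun t _ => (toE_eq_toER t).symm
  obtain ⟨S', horth, hspanQ⟩ := gs S
  have hspan : Submodule.span ℝ (toER '' (↑S' : Set (Fin d → ℚ)))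
      = Submodule.span ℝ (toE '' (T : Set (Fin d → ℤ))) := by
    rw [spanR_eq_of_spanQ_eq hspanQ, himg]
  rw [Metric.mem_closure_iff]
  intro ε hε
  set η : ℝ := min (ε / 4) (2⁻¹ : ℝ) with hηdef
  have hηpos : 0 < η := lt_min (by positivity) (by norm_num)
  have hcardpos : (0:ℝ) < 1 + S'.card := by positivity
  obtain ⟨q0, hq0⟩ := rat_dense w (show (0:ℝ) < η / (1 + S'.card) by positivity)
  have hwmem : w ∈ (Submodule.span ℝ (toER '' (↑S' : Set (Fin d → ℚ))))ᗮ := by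
    rw [hspan]; exact hwH
  obtain ⟨q, hqmem, hqnear⟩ := approx S' horth w hwmem q0
  have hnear : ‖toER q - w‖ < η := by
    calc ‖toER q - w‖ ≤ (1 + S'.card) * ‖toER q0 - w‖ := hqnear
      _ < (1 + S'.card) * (η / (1 + S'.card)) :=
          mul_lt_mul_of_pos_left hq0 hcardpos
      _ = η := by field_simp
  set y : E d := toER q with hy
  have hwnorm : ‖w‖ = 1 := by
    have := hwS
    simp only [unitSphere, Metric.mem_sphere, dist_zero_right] at this
    exact this
  have hη2 : η ≤ 2⁻¹ := min_le_right _ _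
  have habs : |‖y‖ - ‖w‖| ≤ ‖y - w‖ := abs_norm_sub_norm_le y w
  have hynorm : (2:ℝ)⁻¹ ≤ ‖y‖ := by
    rw [hwnorm] at habs
    have := abs_le.1 habs
    linarith
  have hy0 : ‖y‖ ≠ 0 := by positivity
  set u : E d := ‖y‖⁻¹ • y with hu
  have humem : u ∈ (Submodule.span ℝ (toE '' (T : Set (Fin d → ℤ))))ᗮ := by
    rw [← hspan]
    exact Submodule.smul_mem _ _ hqmem
  have hunorm : ‖u‖ = 1 := by
    rw [hu, norm_smul, norm_inv, norm_norm, inv_mul_cancel₀ hy0]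
  have huSph : u ∈ unitSphere d := by
    simp only [unitSphere, Metric.mem_sphere, dist_zero_right]
    exact hunorm
  have huRat : u ∈ ratSphere d := by
    refine ⟨huSph, ?_⟩
    obtain ⟨x, N, hNpos, hxq⟩ := clear_denom q
    have hq0' : q ≠ 0 := by
      intro h
      rw [h, toER_zero] at hy
      rw [hy, norm_zero] at hynorm
      norm_num at hynorm
    refine ⟨x, ?_, (N : ℝ) * ‖y‖, ?_⟩
    · intro hx0
      apply hq0'
      funext i
      have := hxq i
      rw [hx0] at this
      simp only [Pi.zero_apply, Int.cast_zero] at this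
      have hNne : ((N:ℚ)) ≠ 0 := by exact_mod_cast hNpos.ne'
      exact (mul_eq_zero.1 this.symm).resolve_left hNne
    · ext i
      have h1 : toE x i = ((x i : ℚ) : ℝ) := by simp [toE]
      have h2 : (((N : ℝ) * ‖y‖) • u) i = (N : ℝ) * y i := by
        rw [hu, smul_smul, mul_assoc, mul_inv_cancel₀ hy0, mul_one]
        rfl
      rw [h1, h2, hxq i]
      push_cast
      rfl
  refine ⟨u, ⟨humem, huRat⟩, ?_⟩
  have hyu : ‖y - u‖ = |‖y‖ - 1| := by
    have : y - u = (1 - ‖y‖⁻¹) • y := by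
      rw [hu, sub_smul, one_smul]
    rw [this, norm_smul, Real.norm_eq_abs, ← abs_of_nonneg (norm_nonneg y), ← abs_mul,
      abs_of_nonneg (norm_nonneg y), sub_mul, one_mul, inv_mul_cancel₀ hy0]
  have hdistwu : dist w u ≤ ‖w - y‖ + ‖y - u‖ := by
    rw [dist_eq_norm]
    calc ‖w - u‖ = ‖(w - y) + (y - u)‖ := by rw [sub_add_sub_cancel]
      _ ≤ ‖w - y‖ + ‖y - u‖ := norm_add_le _ _
  have h4 : ‖w - y‖ < η := by rw [norm_sub_rev]; exact hnear
  have h5 : ‖y - u‖ < η := by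
    rw [hyu, ← hwnorm]
    calc |‖y‖ - ‖w‖| ≤ ‖y - w‖ := habs
      _ < η := hnear
  have hη4 : η ≤ ε / 4 := min_le_left _ _
  calc dist w u ≤ ‖w - y‖ + ‖y - u‖ := hdistwu
    _ < η + η := by linarith
    _ < ε := by linarith


end BootstrapU

end
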